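/- In the Weierstrass form P [[sI_n - A, -b],[-c^T, -d]] Q = [[sI_{n-r} - Λ, 0],[0, sN - I_{r+1}]] with P, Q nonsingular and N nilpotent of size r+1, the nilpotent N has rank exactly r, i.e., N consists of a single Jordan block: N^r ≠ 0 and N^{r+1} = 0. -/
import Mathlib


open Matrix


/-- The submodule product is linearly equivalent to the product of submodules. -/
def subProdEquiv {R M M' : Type*} [Ring R] [AddCommGroup M] [AddCommGroup M']
    [Module R M] [Module R M'] (p : Submodule R M) (q : Submodule R M') :
    (p.prod q) ≃ₗ[R] p × q where
  toFun x := (⟨x.1.1, x.2.1⟩, ⟨x.1.2, x.2.2⟩)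
  map_add' _ _ := rfl
  map_smul' _ _ := rfl
  invFun x := ⟨(x.1.1, x.2.1), ⟨x.1.2, x.2.2⟩⟩
  left_inv _ := rfl
  right_inv _ := rfl

lemma finrank_range_prodMap {K V₁ V₂ W₁ W₂ : Type*} [Field K]
    [AddCommGroup V₁] [Module K V₁] [AddCommGroup V₂] [Module K V₂]
    [AddCommGroup W₁] [Module K W₁] [AddCommGroup W₂] [Module K W₂]
    [FiniteDimensional K W₁] [FiniteDimensional K W₂]
    (f : V₁ →ₗ[K] W₁) (g : V₂ →ₗ[K] W₂) :
    Module.finrank K (LinearMap.range (f.prodMap g))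
      = Module.finrank K (LinearMap.range f) + Module.finrank K (LinearMap.range g) := by
  have hr : LinearMap.range (f.prodMap g)
      = (LinearMap.range f).prod (LinearMap.range g) := by
    ext ⟨x, y⟩
    simp only [LinearMap.mem_range, Submodule.mem_prod, LinearMap.prodMap_apply, Prod.mk.injEq,
      Prod.exists]
    constructor
    · rintro ⟨a, b, h1, h2⟩; exact ⟨⟨a, h1⟩, ⟨b, h2⟩⟩
    · rintro ⟨⟨a, h1⟩, ⟨b, h2⟩⟩; exact ⟨a, b, h1, h2⟩
  rw [hr, (subProdEquiv _ _).finrank_eq, Module.finrank_prod]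

lemma rank_fromBlocks_diag {l m : Type*} [Fintype l] [Fintype m] [DecidableEq l] [DecidableEq m]
    (A : Matrix l l ℂ) (D : Matrix m m ℂ) :
    (Matrix.fromBlocks A 0 0 D).rank = A.rank + D.rank := by
  classical
  let e := LinearEquiv.sumArrowLequivProdArrow l m ℂ ℂ
  have hconj : (Matrix.fromBlocks A 0 0 D).mulVecLin
      = e.symm.toLinearMap ∘ₗ ((A.mulVecLin.prodMap D.mulVecLin) ∘ₗ e.toLinearMap) := by
    apply LinearMap.ext
    intro x
    funext i
    cases i <;>
      simp [e, Matrix.mulVecLin_apply, Matrix.fromBlocks_mulVec,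
        LinearEquiv.sumArrowLequivProdArrow, Equiv.sumArrowEquivProdArrow]
  rw [Matrix.rank, Matrix.rank, Matrix.rank, hconj]
  rw [LinearMap.range_comp, LinearMap.range_comp, LinearEquiv.range, Submodule.map_top,
    LinearEquiv.finrank_map_eq]
  exact finrank_range_prodMap _ _

lemma sylvester_rank_ineq {m : Type*} [Fintype m] [DecidableEq m]
    (B C : Matrix m m ℂ) :
    B.rank + C.rank ≤ (B * C).rank + Fintype.card m := by
  classical
  set f := B.mulVecLin with hf
  set g := C.mulVecLin with hg
  have hBC : (B * C).rank = Module.finrank ℂ (Submodule.map f (LinearMap.range g)) := by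
    rw [Matrix.rank, Matrix.mulVecLin_mul, LinearMap.range_comp]
  set h := f.domRestrict (LinearMap.range g) with hh
  have hrange : LinearMap.range h = Submodule.map f (LinearMap.range g) :=
    LinearMap.range_domRestrict _ _
  have hrn : Module.finrank ℂ (LinearMap.range h) + Module.finrank ℂ (LinearMap.ker h)
      = Module.finrank ℂ (LinearMap.range g) := by
    have := LinearMap.finrank_range_add_finrank_ker h
    simpa using this
  have hker : Module.finrank ℂ (LinearMap.ker h) ≤ Module.finrank ℂ (LinearMap.ker f) := by
    rw [hh, LinearMap.ker_domRestrict]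
    have hmap : Module.finrank ℂ (Submodule.comap (LinearMap.range g).subtype (LinearMap.ker f))
        = Module.finrank ℂ
          (Submodule.map (LinearMap.range g).subtype
            (Submodule.comap (LinearMap.range g).subtype (LinearMap.ker f))) :=
      (Submodule.equivMapOfInjective _ (Submodule.injective_subtype _) _).finrank_eq
    rw [hmap]
    exact Submodule.finrank_mono (Submodule.map_comap_le _ _)
  have hrnf : Module.finrank ℂ (LinearMap.range f) + Module.finrank ℂ (LinearMap.ker f)
      = Fintype.card m := by
    have := LinearMap.finrank_range_add_finrank_ker f
    simpa [Module.finrank_fintype_fun_eq_card] using this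
  have hBrank : B.rank = Module.finrank ℂ (LinearMap.range f) := rfl
  have hCrank : C.rank = Module.finrank ℂ (LinearMap.range g) := rfl
  rw [hBrank, hCrank, hBC, ← hrange]
  omega

lemma nilpotent_pow_card {m : Type*} [Fintype m] [DecidableEq m]
    (N : Matrix m m ℂ) (hN : IsNilpotent N) : N ^ (Fintype.card m) = 0 := by
  classical
  obtain ⟨k, hk⟩ := hN
  let φ : Matrix m m ℂ ≃ₐ[ℂ] ((m → ℂ) →ₗ[ℂ] (m → ℂ)) := Matrix.toLinAlgEquiv'
  have hφk : (φ N) ^ k = 0 := by rw [← map_pow, hk, map_zero]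
  have hfr : Module.finrank ℂ (m → ℂ) = Fintype.card m :=
    Module.finrank_fintype_fun_eq_card ℂ
  have hker : LinearMap.ker ((φ N) ^ k) = ⊤ := by rw [hφk]; exact LinearMap.ker_zero
  have hle := Module.End.ker_pow_le_ker_pow_finrank (φ N) k
  rw [hker, top_le_iff, hfr] at hle
  have : (φ N) ^ (Fintype.card m) = 0 := LinearMap.ker_eq_top.mp hle
  have : φ (N ^ (Fintype.card m)) = φ 0 := by rw [map_pow, this, map_zero]
  exact φ.injective this


/-- In the Weierstrass form, the nilpotent `N` has rank exactly `r`, i.e. it consists of a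
single Jordan block: `N ^ r ≠ 0` and `N ^ (r + 1) = 0`. -/
theorem stmt_7 (n r : ℕ) (hr : r ≤ n)
    (A : Matrix (Fin n) (Fin n) ℂ) (b c : Fin n → ℂ) (d : ℂ)
    (P : Matrix (Fin (n - r) ⊕ Fin (r + 1)) (Fin n ⊕ Unit) ℂ)
    (P' : Matrix (Fin n ⊕ Unit) (Fin (n - r) ⊕ Fin (r + 1)) ℂ)
    (Q : Matrix (Fin n ⊕ Unit) (Fin (n - r) ⊕ Fin (r + 1)) ℂ)
    (Q' : Matrix (Fin (n - r) ⊕ Fin (r + 1)) (Fin n ⊕ Unit) ℂ)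
    (hPP' : P * P' = 1) (hP'P : P' * P = 1) (hQQ' : Q * Q' = 1) (hQ'Q : Q' * Q = 1)
    (Lam : Matrix (Fin (n - r)) (Fin (n - r)) ℂ)
    (N : Matrix (Fin (r + 1)) (Fin (r + 1)) ℂ) (hN : IsNilpotent N)
    (hdecomp : ∀ s : ℂ,
      P * (Matrix.fromBlocks (s • (1 : Matrix (Fin n) (Fin n) ℂ) - A)
            (Matrix.of fun i (_ : Unit) => -b i)
            (Matrix.of fun (_ : Unit) j => -c j)
            (Matrix.of fun (_ : Unit) (_ : Unit) => -d)) * Q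
        = Matrix.fromBlocks (s • (1 : Matrix (Fin (n - r)) (Fin (n - r)) ℂ) - Lam) 0 0
            (s • N - 1))
    : N.rank = r ∧ N ^ r ≠ 0 ∧ N ^ (r + 1) = 0 := by
  classical
  have h1 := hdecomp 1
  have h0 := hdecomp 0
  set E : Matrix (Fin n ⊕ Unit) (Fin n ⊕ Unit) ℂ :=
    Matrix.fromBlocks (1 : Matrix (Fin n) (Fin n) ℂ) 0 0 (0 : Matrix Unit Unit ℂ) with hE
  have key : P * E * Q
      = Matrix.fromBlocks (1 : Matrix (Fin (n - r)) (Fin (n - r)) ℂ) 0 0 N := by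
    have hsub :
        P * (Matrix.fromBlocks ((1:ℂ) • (1 : Matrix (Fin n) (Fin n) ℂ) - A)
            (Matrix.of fun i (_ : Unit) => -b i)
            (Matrix.of fun (_ : Unit) j => -c j)
            (Matrix.of fun (_ : Unit) (_ : Unit) => -d)) * Q
          - P * (Matrix.fromBlocks ((0:ℂ) • (1 : Matrix (Fin n) (Fin n) ℂ) - A)
            (Matrix.of fun i (_ : Unit) => -b i)
            (Matrix.of fun (_ : Unit) j => -c j)
            (Matrix.of fun (_ : Unit) (_ : Unit) => -d)) * Q
        = Matrix.fromBlocks ((1:ℂ) • (1 : Matrix (Fin (n - r)) (Fin (n - r)) ℂ) - Lam) 0 0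
            ((1:ℂ) • N - 1)
          - Matrix.fromBlocks ((0:ℂ) • (1 : Matrix (Fin (n - r)) (Fin (n - r)) ℂ) - Lam) 0 0
            ((0:ℂ) • N - 1) := by
      rw [h1, h0]
    rw [← Matrix.sub_mul, ← Matrix.mul_sub] at hsub
    have hB : (Matrix.fromBlocks ((1:ℂ) • (1 : Matrix (Fin n) (Fin n) ℂ) - A)
            (Matrix.of fun i (_ : Unit) => -b i)
            (Matrix.of fun (_ : Unit) j => -c j)
            (Matrix.of fun (_ : Unit) (_ : Unit) => -d))
          - (Matrix.fromBlocks ((0:ℂ) • (1 : Matrix (Fin n) (Fin n) ℂ) - A)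
            (Matrix.of fun i (_ : Unit) => -b i)
            (Matrix.of fun (_ : Unit) j => -c j)
            (Matrix.of fun (_ : Unit) (_ : Unit) => -d)) = E := by
      ext (i | i) (j | j) <;> simp [hE]
    have hR : Matrix.fromBlocks ((1:ℂ) • (1 : Matrix (Fin (n - r)) (Fin (n - r)) ℂ) - Lam) 0 0
            ((1:ℂ) • N - 1)
          - Matrix.fromBlocks ((0:ℂ) • (1 : Matrix (Fin (n - r)) (Fin (n - r)) ℂ) - Lam) 0 0
            ((0:ℂ) • N - 1)
        = Matrix.fromBlocks (1 : Matrix (Fin (n - r)) (Fin (n - r)) ℂ) 0 0 N := by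
      ext (i | i) (j | j) <;> simp
    rw [hB, hR] at hsub
    exact hsub
  have hEQ : P' * (P * E * Q) * Q' = E := by
    rw [Matrix.mul_assoc P E Q, ← Matrix.mul_assoc P' P (E * Q), hP'P, Matrix.one_mul,
      Matrix.mul_assoc E Q Q', hQQ', Matrix.mul_one]
  have le1 : (P * E * Q).rank ≤ E.rank := by
    calc (P * E * Q).rank = (P * (E * Q)).rank := by rw [Matrix.mul_assoc]
      _ ≤ (E * Q).rank := Matrix.rank_mul_le_right _ _
      _ ≤ E.rank := Matrix.rank_mul_le_left _ _
  have le2 : E.rank ≤ (P * E * Q).rank := by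
    conv_lhs => rw [← hEQ]
    calc (P' * (P * E * Q) * Q').rank = (P' * ((P * E * Q) * Q')).rank := by rw [Matrix.mul_assoc]
      _ ≤ ((P * E * Q) * Q').rank := Matrix.rank_mul_le_right _ _
      _ ≤ (P * E * Q).rank := Matrix.rank_mul_le_left _ _
  have hErank : E.rank = n := by
    rw [hE, rank_fromBlocks_diag, Matrix.rank_one, Matrix.rank_zero, Fintype.card_fin,
      Nat.add_zero]
  have hRrank : (Matrix.fromBlocks (1 : Matrix (Fin (n - r)) (Fin (n - r)) ℂ) 0 0 N).rank
      = (n - r) + N.rank := by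
    rw [rank_fromBlocks_diag, Matrix.rank_one, Fintype.card_fin]
  have hNr : N.rank = r := by
    have h6 : (n - r) + N.rank = n := by
      rw [← hRrank, ← key, le_antisymm le1 le2, hErank]
    omega
  have hpow : N ^ (r + 1) = 0 := by
    have := nilpotent_pow_card N hN
    simpa [Fintype.card_fin] using this
  have hchain : ∀ k, r + 1 ≤ (N ^ k).rank + k := by
    intro k
    induction k with
    | zero => simp [Matrix.rank_one, Fintype.card_fin]
    | succ k ih =>
      have hs := sylvester_rank_ineq (N ^ k) N
      rw [← pow_succ, hNr, Fintype.card_fin] at hs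
      omega
  have hne : N ^ r ≠ 0 := by
    intro h
    have hc := hchain r
    rw [h, Matrix.rank_zero] at hc
    omega
  exact ⟨hNr, hne, hpow⟩
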